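/- arXiv:2510.25313 — 3 statements merged into one kernel-verified Lean document; each statement's English description precedes it below -/
import Mathlib

section
/- For every density matrix ρ on ℂ^d one has M_Re(ρ) ≤ 1 − √2/2; moreover, for the qubit pure state |+i⟩ = (|0⟩ + i|1⟩)/√2, the value M_Re(|+i⟩⟨+i|) = 1 − √2/2 is attained. -/
open Matrix Complex ComplexOrder Classical

/-- The positive semidefinite square root of a matrix (junk value `0` if not PSD). -/
noncomputable def psqrt {n : Type*} [Fintype n] [DecidableEq n] (A : Matrix n n ℂ) :
    Matrix n n ℂ :=
  if h : A.PosSemidef then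
    (h.1.eigenvectorUnitary : Matrix n n ℂ) * diagonal ((↑) ∘ Real.sqrt ∘ h.1.eigenvalues) *
      (star h.1.eigenvectorUnitary : Matrix n n ℂ) else 0

/-- Entrywise complex conjugate of a matrix. -/
def mconj {m n : Type*} (A : Matrix m n ℂ) : Matrix m n ℂ := A.map (starRingEnd ℂ)

/-- Fidelity `F(ρ,σ) = Tr √(√ρ σ √ρ)`. -/
noncomputable def fidelity {n : Type*} [Fintype n] [DecidableEq n] (ρ σ : Matrix n n ℂ) : ℝ :=
  ((psqrt (psqrt ρ * σ * psqrt ρ)).trace).re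

/-- The real part state `Re(ρ) = (ρ + ρ*)/2`. -/
noncomputable def reState {n : Type*} (ρ : Matrix n n ℂ) : Matrix n n ℂ :=
  ((1 : ℂ)/2) • (ρ + mconj ρ)

/-- The imaginarity measure `M_Re(ρ) = 1 - F(ρ, Re(ρ))`. -/
noncomputable def MRe {n : Type*} [Fintype n] [DecidableEq n] (ρ : Matrix n n ℂ) : ℝ :=
  1 - fidelity ρ (reState ρ)

/-- A density matrix: positive semidefinite with trace 1. -/
def IsDensityMatrix {n : Type*} [Fintype n] (ρ : Matrix n n ℂ) : Prop :=
  ρ.PosSemidef ∧ ρ.trace = 1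

lemma psd_smul {n : Type*} [Fintype n] {A : Matrix n n ℂ} (hA : A.PosSemidef)
    {c : ℝ} (hc : 0 ≤ c) : ((c : ℂ) • A).PosSemidef := by
  refine ⟨?_, fun x => ?_⟩
  · show ((c:ℂ) • A)ᴴ = (c:ℂ) • A
    rw [Matrix.conjTranspose_smul, hA.1.eq]
    congr 1
    simp [Complex.star_def, Complex.conj_ofReal]
  · exact (hA.smul (by exact_mod_cast hc : (0:ℂ) ≤ (c:ℂ))).2 x

lemma psd_diag_nonneg {n : Type*} [Fintype n] [DecidableEq n] {A : Matrix n n ℂ}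
    (hA : A.PosSemidef) (i : n) : 0 ≤ A i i := by
  exact hA.diag_nonneg

lemma trace_re_le_of_sq_le_sq {n : Type*} [Fintype n] [DecidableEq n]
    {T S : Matrix n n ℂ} (hT : T.PosSemidef) (hS : S.PosSemidef)
    (h : (S * S - T * T).PosSemidef) : T.trace.re ≤ S.trace.re := by
  classical
  set U : Matrix n n ℂ := (hS.1.eigenvectorUnitary : Matrix n n ℂ) with hUdef
  have hUU : U * star U = 1 := (Matrix.mem_unitaryGroup_iff).mp hS.1.eigenvectorUnitary.2
  have hUU' : star U * U = 1 := (Matrix.mem_unitaryGroup_iff').mp hS.1.eigenvectorUnitary.2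
  have cancel : ∀ X : Matrix n n ℂ, U * (star U * X) = X := fun X => by
    rw [← mul_assoc, hUU, one_mul]
  have conjmul : ∀ A B : Matrix n n ℂ,
      (star U * A * U) * (star U * B * U) = star U * (A * B) * U := by
    intro A B
    simp only [mul_assoc, cancel]
  set s : n → ℝ := hS.1.eigenvalues with hsdef
  have hdiag : star U * S * U = diagonal (RCLike.ofReal ∘ s) :=
    by have := hS.1.conjStarAlgAut_star_eigenvectorUnitary
       rw [Unitary.conjStarAlgAut_star_apply] at this
       exact this
  set T' : Matrix n n ℂ := star U * T * U with hT'def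
  have hT' : T'.PosSemidef := by
    have := hT.conjTranspose_mul_mul_same U
    rwa [← Matrix.star_eq_conjTranspose] at this
  have htrT : T'.trace = T.trace := by
    rw [hT'def, Matrix.trace_mul_cycle, hUU, one_mul]
  have hT2 : T' * T' = star U * (T * T) * U := by
    rw [hT'def]; exact conjmul T T
  have hS2 : star U * (S * S) * U = diagonal (fun i => ((s i : ℝ) : ℂ) ^ 2) := by
    rw [← conjmul S S, hdiag, diagonal_mul_diagonal]
    congr 1
    funext i
    simp [pow_two]
  have hD : (diagonal (fun i => ((s i : ℝ) : ℂ) ^ 2) - T' * T').PosSemidef := by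
    have := h.conjTranspose_mul_mul_same U
    rw [← Matrix.star_eq_conjTranspose] at this
    have heq : star U * (S * S - T * T) * U
        = diagonal (fun i => ((s i : ℝ) : ℂ) ^ 2) - T' * T' := by
      rw [mul_sub, sub_mul, hS2, hT2]
    rwa [heq] at this
  have key : ∀ i, (T' i i).re ≤ s i := by
    intro i
    have hd0 : 0 ≤ T' i i := psd_diag_nonneg hT' i
    obtain ⟨hre0, him0⟩ := Complex.nonneg_iff.mp hd0
    have hsq : ((T' * T') i i).re = ∑ j, Complex.normSq (T' i j) := by
      rw [Matrix.mul_apply, Complex.re_sum]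
      refine Finset.sum_congr rfl fun j _ => ?_
      have hji : T' j i = star (T' i j) := by
        have := congrFun (congrFun hT'.1 j) i
        rw [Matrix.conjTranspose_apply] at this
        rw [← this]
      rw [hji]
      simp [Complex.star_def, Complex.mul_conj]
    have hle1 : (T' i i).re ^ 2 ≤ ((T' * T') i i).re := by
      rw [hsq]
      have h1 : Complex.normSq (T' i i) ≤ ∑ j, Complex.normSq (T' i j) :=
        Finset.single_le_sum (fun j _ => Complex.normSq_nonneg _) (Finset.mem_univ i)
      have h2 : (T' i i).re ^ 2 ≤ Complex.normSq (T' i i) := by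
        rw [Complex.normSq_apply]
        nlinarith [sq_nonneg (T' i i).im]
      linarith
    have hle2 : ((T' * T') i i).re ≤ (s i) ^ 2 := by
      have hd := psd_diag_nonneg hD i
      obtain ⟨hre, _⟩ := Complex.nonneg_iff.mp hd
      have heq2 : ((diagonal (fun i => ((s i : ℝ) : ℂ) ^ 2) - T' * T') i i).re
          = (s i) ^ 2 - ((T' * T') i i).re := by
        simp [Matrix.sub_apply, Matrix.diagonal_apply_eq]
        norm_cast
      rw [heq2] at hre
      linarith
    have hsnn : 0 ≤ s i := hS.eigenvalues_nonneg i
    nlinarith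
  have htrS : S.trace.re = ∑ i, s i := by
    have h0 : S.trace = (diagonal (RCLike.ofReal ∘ s) : Matrix n n ℂ).trace := by
      conv_lhs => rw [hS.1.spectral_theorem]
      rw [Unitary.conjStarAlgAut_apply, Matrix.trace_mul_cycle, ← hUdef, hUU', one_mul]
    rw [h0, Matrix.trace_diagonal, Complex.re_sum]
    simp
  rw [← htrT, htrS, Matrix.trace, Complex.re_sum]
  exact Finset.sum_le_sum fun i _ => key i

noncomputable def Matrix.PosSemidef.sqrt {n : Type*} [Fintype n] [DecidableEq n]
    {A : Matrix n n ℂ} (_h : A.PosSemidef) : Matrix n n ℂ := psqrt A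

section sqrtAux
open scoped MatrixOrder

lemma psqrt_eq_cfc {n : Type*} [Fintype n] [DecidableEq n] {A : Matrix n n ℂ}
    (h : A.PosSemidef) : psqrt A = CFC.sqrt A := by
  rw [CFC.sqrt_eq_real_sqrt A h.nonneg, cfcₙ_eq_cfc (hf := Real.continuous_sqrt.continuousOn)
    (hf0 := Real.sqrt_zero), h.1.cfc_eq, IsHermitian.cfc, Unitary.conjStarAlgAut_apply,
    psqrt, dif_pos h]
  rfl

lemma Matrix.PosSemidef.posSemidef_sqrt {n : Type*} [Fintype n] [DecidableEq n]
    {A : Matrix n n ℂ} (h : A.PosSemidef) : h.sqrt.PosSemidef := by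
  show (psqrt A).PosSemidef
  rw [psqrt_eq_cfc h]
  exact (CFC.sqrt_nonneg A).posSemidef

lemma Matrix.PosSemidef.sqrt_mul_self {n : Type*} [Fintype n] [DecidableEq n]
    {A : Matrix n n ℂ} (h : A.PosSemidef) : h.sqrt * h.sqrt = A := by
  show psqrt A * psqrt A = A
  rw [psqrt_eq_cfc h]
  exact CFC.sqrt_mul_sqrt_self A h.nonneg

lemma Matrix.PosSemidef.eq_sqrt_of_sq_eq {n : Type*} [Fintype n] [DecidableEq n]
    {A B : Matrix n n ℂ} (hA : A.PosSemidef) (hB : B.PosSemidef) (hsq : A ^ 2 = B) :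
    A = hB.sqrt := by
  show A = psqrt B
  rw [psqrt_eq_cfc hB]
  exact (CFC.sqrt_unique (by rw [← pow_two, hsq]) hA.nonneg).symm

end sqrtAux

lemma psqrt_eq {n : Type*} [Fintype n] [DecidableEq n] {A : Matrix n n ℂ}
    (h : A.PosSemidef) : psqrt A = h.sqrt := rfl

lemma mconj_psd {n : Type*} [Fintype n] {ρ : Matrix n n ℂ} (hρ : ρ.PosSemidef) :
    (mconj ρ).PosSemidef := by
  have heq : mconj ρ = ρᵀ := by
    ext i j
    have := congrFun (congrFun hρ.1 j) i
    rw [Matrix.conjTranspose_apply] at this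
    simpa [mconj, Matrix.map_apply] using this
  rw [heq]
  exact hρ.transpose

lemma fidelity_ge {n : Type*} [Fintype n] [DecidableEq n] {ρ : Matrix n n ℂ}
    (hρ : IsDensityMatrix ρ) : Real.sqrt 2 / 2 ≤ fidelity ρ (reState ρ) := by
  obtain ⟨hpsd, htr⟩ := hρ
  set Q : Matrix n n ℂ := hpsd.sqrt with hQdef
  have hQpsd : Q.PosSemidef := hpsd.posSemidef_sqrt
  have hQQ : Q * Q = ρ := hpsd.sqrt_mul_self
  have hQH : Qᴴ = Q := hQpsd.1
  have hconjρ : (mconj ρ).PosSemidef := mconj_psd hpsd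
  have h12 : ((1:ℂ)/2) = (((1/2 : ℝ) : ℝ) : ℂ) := by norm_num
  have hσ : (reState ρ).PosSemidef := by
    rw [reState, h12]
    exact psd_smul (hpsd.add hconjρ) (by norm_num)
  have hM : (Q * reState ρ * Q).PosSemidef := by
    have := hσ.mul_mul_conjTranspose_same Q
    rwa [hQH] at this
  have hSpsd := hM.posSemidef_sqrt
  have hSS : hM.sqrt * hM.sqrt = Q * reState ρ * Q := hM.sqrt_mul_self
  set c : ℝ := Real.sqrt 2 / 2 with hcdef
  have hc : (0:ℝ) ≤ c := by positivity
  have hTpsd : ((c:ℂ) • ρ).PosSemidef := psd_smul hpsd hc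
  have hcc : (c:ℂ) * (c:ℂ) = 1/2 := by
    rw [← Complex.ofReal_mul]
    have : c * c = 1/2 := by
      rw [hcdef, div_mul_div_comm, Real.mul_self_sqrt (by norm_num)]
      norm_num
    rw [this]
    norm_num
  have hTT : ((c:ℂ) • ρ) * ((c:ℂ) • ρ) = ((1:ℂ)/2) • (ρ * ρ) := by
    rw [Matrix.smul_mul, Matrix.mul_smul, smul_smul, hcc]
  have e1 : ρ * ρ = Q * ρ * Q := by
    rw [← hQQ]
    simp only [mul_assoc]
  have e2 : Q * reState ρ * Q = ((1:ℂ)/2) • (Q * ρ * Q + Q * mconj ρ * Q) := by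
    rw [reState, Matrix.mul_smul, Matrix.smul_mul, mul_add, add_mul]
  have hdiff : (hM.sqrt * hM.sqrt - ((c:ℂ) • ρ) * ((c:ℂ) • ρ)).PosSemidef := by
    have heq : hM.sqrt * hM.sqrt - ((c:ℂ) • ρ) * ((c:ℂ) • ρ)
        = ((1:ℂ)/2) • (Q * mconj ρ * Q) := by
      rw [hSS, hTT, e2, e1, ← smul_sub]
      congr 1
      abel
    rw [heq, h12]
    refine psd_smul ?_ (by norm_num)
    have := hconjρ.conjTranspose_mul_mul_same Q
    rwa [hQH] at this
  have := trace_re_le_of_sq_le_sq hTpsd hSpsd hdiff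
  have hTtr : (((c:ℂ) • ρ).trace).re = c := by
    rw [Matrix.trace_smul, htr]
    simp
  rw [hTtr] at this
  have hfid : fidelity ρ (reState ρ) = (hM.sqrt).trace.re := by
    rw [fidelity, psqrt_eq hpsd, ← hQdef, psqrt_eq hM]
  rw [hfid]
  exact this

lemma mre_plusI : MRe (!![1/2, -Complex.I/2; Complex.I/2, 1/2] : Matrix (Fin 2) (Fin 2) ℂ) =
      1 - Real.sqrt 2 / 2 := by
  set ρ : Matrix (Fin 2) (Fin 2) ℂ := !![1/2, -Complex.I/2; Complex.I/2, 1/2] with hρdef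
  have hH : ρᴴ = ρ := by
    ext i j
    fin_cases i <;> fin_cases j <;>
      simp [hρdef, Matrix.conjTranspose_apply, Complex.ext_iff]
  have hsq : ρ * ρ = ρ := by
    ext i j
    fin_cases i <;> fin_cases j <;>
      simp [hρdef, Matrix.mul_apply, Fin.sum_univ_two, Complex.ext_iff] <;>
      ring_nf <;> simp [Complex.I_sq] <;> norm_num
  have hpsd : ρ.PosSemidef := by
    have := Matrix.posSemidef_conjTranspose_mul_self ρ
    rwa [hH, hsq] at this
  have htr : ρ.trace = 1 := by
    simp [hρdef, Matrix.trace_fin_two]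
    norm_num
  have hsqrt : psqrt ρ = ρ := by
    rw [psqrt_eq hpsd]
    exact (hpsd.eq_sqrt_of_sq_eq hpsd (by rw [pow_two, hsq])).symm
  have hre : reState ρ = ((1:ℂ)/2) • (1 : Matrix (Fin 2) (Fin 2) ℂ) := by
    rw [reState]
    congr 1
    ext i j
    fin_cases i <;> fin_cases j <;>
      simp [hρdef, mconj, Matrix.map_apply, Complex.ext_iff, Matrix.one_apply, map_ofNat] <;>
      norm_num [Complex.div_re, Complex.div_im]
  have hMeq : ρ * reState ρ * ρ = ((1:ℂ)/2) • ρ := by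
    rw [hre, Matrix.mul_smul, mul_one, Matrix.smul_mul, hsq]
  have h12 : ((1:ℂ)/2) = (((1/2:ℝ) : ℝ) : ℂ) := by norm_num
  have hM : (((1:ℂ)/2) • ρ).PosSemidef := by
    rw [h12]; exact psd_smul hpsd (by norm_num)
  set c : ℝ := Real.sqrt 2 / 2 with hcdef
  have hc : (0:ℝ) ≤ c := by positivity
  have hcc : (c:ℂ) * (c:ℂ) = 1/2 := by
    rw [← Complex.ofReal_mul]
    have : c * c = 1/2 := by
      rw [hcdef, div_mul_div_comm, Real.mul_self_sqrt (by norm_num)]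
      norm_num
    rw [this]; norm_num
  have hsqrtM : ((c:ℂ) • ρ) = hM.sqrt := by
    refine (psd_smul hpsd hc).eq_sqrt_of_sq_eq hM ?_
    rw [pow_two, Matrix.smul_mul, Matrix.mul_smul, smul_smul, hcc, hsq]
  have hfid : fidelity ρ (reState ρ) = c := by
    rw [fidelity, hsqrt, hMeq, psqrt_eq hM, ← hsqrtM, Matrix.trace_smul, htr]
    simp
  rw [MRe, hfid]

theorem stmt1 :
    (∀ (d : ℕ) (ρ : Matrix (Fin d) (Fin d) ℂ), IsDensityMatrix ρ →
      MRe ρ ≤ 1 - Real.sqrt 2 / 2) ∧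
    MRe (!![1/2, -Complex.I/2; Complex.I/2, 1/2] : Matrix (Fin 2) (Fin 2) ℂ) =
      1 - Real.sqrt 2 / 2 := by
  constructor
  · intro d ρ hρ
    have := fidelity_ge hρ
    rw [MRe]
    linarith
  · exact mre_plusI
end

section
/- For every density matrix ρ on ℂ^d, M_Re(ρ) ≤ 1 − √(P(ρ) − M_tr(ρ)²), where √ denotes the real square root (the quantity P(ρ) − M_tr(ρ)² being taken when nonnegative; equivalently, (1 − M_Re(ρ))² + M_tr(ρ)² ≥ P(ρ)). -/
open Matrix Complex ComplexOrder Classical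

/-- The trace norm `‖A‖_tr = Tr √(Aᴴ A)`. -/
noncomputable def trNorm {n : Type*} [Fintype n] [DecidableEq n] (A : Matrix n n ℂ) : ℝ :=
  ((psqrt (Aᴴ * A)).trace).re

/-- The trace norm imaginarity `M_tr(ρ) = (1/2)‖ρ - ρ*‖_tr`. -/
noncomputable def Mtr {n : Type*} [Fintype n] [DecidableEq n] (ρ : Matrix n n ℂ) : ℝ :=
  (1/2) * trNorm (ρ - mconj ρ)

/-- The purity `P(ρ) = Tr(ρ²)`. -/
noncomputable def purity {n : Type*} [Fintype n] [DecidableEq n] (ρ : Matrix n n ℂ) : ℝ :=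
  ((ρ * ρ).trace).re

lemma psqrt_psd {n : Type*} [Fintype n] [DecidableEq n] {A : Matrix n n ℂ}
    (hA : A.PosSemidef) : (psqrt A).PosSemidef := by
  rw [psqrt, dif_pos hA]
  have hD : (diagonal ((↑) ∘ Real.sqrt ∘ hA.1.eigenvalues : n → ℂ)).PosSemidef :=
    Matrix.posSemidef_diagonal_iff.mpr fun i => by simp [Complex.zero_le_real, Real.sqrt_nonneg]
  simpa [Matrix.star_eq_conjTranspose] using
    hD.mul_mul_conjTranspose_same (hA.1.eigenvectorUnitary : Matrix n n ℂ)

lemma psqrt_mul_self {n : Type*} [Fintype n] [DecidableEq n] {A : Matrix n n ℂ}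
    (hA : A.PosSemidef) : psqrt A * psqrt A = A := by
  rw [psqrt, dif_pos hA]
  set u := hA.1.eigenvectorUnitary with hu
  set U : Matrix n n ℂ := (u : Matrix n n ℂ) with hU
  have hUU : star U * U = 1 := by simp [hU]
  set D := diagonal ((↑) ∘ Real.sqrt ∘ hA.1.eigenvalues : n → ℂ) with hD
  conv_rhs => rw [hA.1.spectral_theorem, Unitary.conjStarAlgAut_apply]
  rw [show U * D * star U * (U * D * star U) = U * D * (star U * U) * D * star U by
    simp only [Matrix.mul_assoc], hUU, Matrix.mul_one, Matrix.mul_assoc U D D]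
  congr 2
  rw [hD, diagonal_mul_diagonal]
  congr 1
  funext i
  simp only [Function.comp_apply]
  rw [← Complex.ofReal_mul, Real.mul_self_sqrt (hA.eigenvalues_nonneg i)]
  rfl

open scoped InnerProductSpace MatrixOrder in
lemma key_trace {n : Type*} [Fintype n] [DecidableEq n] {A : Matrix n n ℂ} (hA : A.PosSemidef) :
    0 ≤ A.trace.re ∧ ((A * A).trace).re ≤ A.trace.re ^ 2 := by
  obtain ⟨B, rfl⟩ : ∃ B : Matrix n n ℂ, A = Bᴴ * B :=
    CStarAlgebra.nonneg_iff_eq_star_mul_self.mp hA.nonneg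
  set v : n → EuclideanSpace ℂ n := fun i => WithLp.toLp 2 (fun k => B k i) with hv
  have hentry : ∀ i j, (Bᴴ * B) i j = ⟪v i, v j⟫_ℂ := by
    intro i j
    simp [Matrix.mul_apply, Matrix.conjTranspose_apply, PiLp.inner_apply, RCLike.inner_apply, hv, mul_comm]
  have hdiag : ∀ i, (Bᴴ * B) i i = ((‖v i‖ ^ 2 : ℝ) : ℂ) := fun i => by
    rw [hentry, inner_self_eq_norm_sq_to_K]; norm_cast
  have htr : (Bᴴ * B).trace = ((∑ i, ‖v i‖ ^ 2 : ℝ) : ℂ) := by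
    simp only [Matrix.trace, Matrix.diag_apply]
    push_cast
    exact Finset.sum_congr rfl fun i _ => by rw [hdiag]; push_cast; ring
  have htrre : (Bᴴ * B).trace.re = ∑ i, ‖v i‖ ^ 2 := by rw [htr, Complex.ofReal_re]
  constructor
  · rw [htrre]; positivity
  · have htr2 : ((Bᴴ * B) * (Bᴴ * B)).trace.re = ∑ i, ∑ j, ‖⟪v i, v j⟫_ℂ‖ ^ 2 := by
      simp only [Matrix.trace, Matrix.diag_apply, Complex.re_sum]
      refine Finset.sum_congr rfl fun i _ => ?_
      rw [Matrix.mul_apply, Complex.re_sum]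
      refine Finset.sum_congr rfl fun j _ => ?_
      rw [hentry, hentry, ← inner_conj_symm (v i) (v j)]
      rw [mul_comm, Complex.mul_conj, Complex.ofReal_re, Complex.normSq_eq_norm_sq,
        Complex.norm_conj]
    rw [htr2, htrre, sq, Finset.sum_mul_sum]
    refine Finset.sum_le_sum fun i _ => Finset.sum_le_sum fun j _ => ?_
    calc ‖⟪v i, v j⟫_ℂ‖ ^ 2 ≤ (‖v i‖ * ‖v j‖) ^ 2 := by
          apply pow_le_pow_left₀ (norm_nonneg _) (norm_inner_le_norm _ _)
      _ = ‖v i‖ ^ 2 * ‖v j‖ ^ 2 := by ring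

lemma psd_smul_half {n : Type*} [Fintype n] {A : Matrix n n ℂ} (hA : A.PosSemidef) :
    (((1 : ℂ)/2) • A).PosSemidef := by
  refine ⟨?_, fun x => ?_⟩
  · have h := hA.1
    rw [Matrix.IsHermitian, Matrix.conjTranspose_smul, h.eq]
    congr 1
    simp
  · exact (hA.smul (a := (1 : ℂ)/2) (by norm_num [Complex.le_def])).2 x

set_option maxHeartbeats 1000000 in
theorem stmt13 (d : ℕ) (ρ : Matrix (Fin d) (Fin d) ℂ) (hρ : IsDensityMatrix ρ) :
    MRe ρ ≤ 1 - Real.sqrt (purity ρ - Mtr ρ ^ 2) := by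
  obtain ⟨h1, htr1⟩ := hρ
  have hherm : ρᴴ = ρ := h1.1
  have hconj : mconj ρ = ρᵀ := by
    ext i j
    simp only [mconj, Matrix.map_apply, Matrix.transpose_apply]
    conv_rhs => rw [← hherm]
    simp [Matrix.conjTranspose_apply]
  set Rσ := reState ρ with hRσ
  have hRpsd : Rσ.PosSemidef := by
    rw [hRσ, reState, hconj]
    exact psd_smul_half (h1.add h1.transpose)
  set S := psqrt ρ with hS
  have hpsρ : psqrt ρ = S := hS.symm
  have hSH : Sᴴ = S := (psqrt_psd h1).1
  have hM : (S * Rσ * S).PosSemidef := by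
    have h := hRpsd.conjTranspose_mul_mul_same S
    rwa [hSH] at h
  have hMsq : psqrt (S * Rσ * S) = psqrt (S * Rσ * S) := rfl
  have hMtrace : (S * Rσ * S).trace = (ρ * Rσ).trace := by
    rw [Matrix.trace_mul_cycle, hS, psqrt_mul_self h1]
  have key1 := key_trace (psqrt_psd hM)
  rw [psqrt_mul_self hM] at key1
  obtain ⟨F, hFdef⟩ : ∃ x, (psqrt (S * Rσ * S)).trace.re = x := ⟨_, rfl⟩
  rw [hFdef] at key1
  have hFeq : fidelity ρ Rσ = F := by rw [fidelity, hpsρ, hFdef]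
  set c : ℝ := (ρ * ρᵀ).trace.re with hc
  have hρR : (ρ * Rσ).trace.re = (purity ρ + c)/2 := by
    rw [hRσ, reState, hconj, Matrix.mul_smul, Matrix.trace_smul, Matrix.mul_add, Matrix.trace_add,
      smul_eq_mul, Complex.mul_re]
    simp only [Complex.add_re, purity]
    norm_num
    rw [← hc]
    ring
  -- trace norm part
  set A := ρ - mconj ρ with hA
  have hAt : A = ρ - ρᵀ := by rw [hA, hconj]
  have hAH : Aᴴ = A := by
    rw [hAt, Matrix.conjTranspose_sub, hherm]
    congr 1
  have hAApsd : (Aᴴ * A).PosSemidef := Matrix.posSemidef_conjTranspose_mul_self A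
  have hAAsq : psqrt (Aᴴ * A) = psqrt (Aᴴ * A) := rfl
  have key2 := key_trace (psqrt_psd hAApsd)
  rw [psqrt_mul_self hAApsd] at key2
  obtain ⟨T, hTdef⟩ : ∃ x, (psqrt (Aᴴ * A)).trace.re = x := ⟨_, rfl⟩
  rw [hTdef] at key2
  have hT : trNorm A = T := by rw [trNorm, hTdef]
  have hAA : (Aᴴ * A).trace.re = 2 * purity ρ - 2 * c := by
    rw [hAH, hAt]
    have e1 : (ρ - ρᵀ) * (ρ - ρᵀ) = ρ * ρ - ρ * ρᵀ - ρᵀ * ρ + ρᵀ * ρᵀ := by noncomm_ring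
    have e2 : (ρᵀ * ρᵀ).trace = (ρ * ρ).trace := by
      rw [← Matrix.transpose_mul, Matrix.trace_transpose]
    have e3 : (ρᵀ * ρ).trace = (ρ * ρᵀ).trace := Matrix.trace_mul_comm _ _
    rw [e1, Matrix.trace_add, Matrix.trace_sub, Matrix.trace_sub, e2, e3]
    simp only [Complex.add_re, Complex.sub_re, purity, hc]
    ring
  have hMtrSq : (purity ρ - c)/2 ≤ Mtr ρ ^ 2 := by
    have h2 := key2.2
    rw [hAA] at h2
    have hMtrEq : Mtr ρ = (1/2) * T := by rw [Mtr, ← hA, hT]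
    rw [hMtrEq]
    nlinarith [key2.1]
  have hFbound : purity ρ - Mtr ρ ^ 2 ≤ F ^ 2 := by
    have h2 := key1.2
    rw [hMtrace] at h2
    rw [hρR] at h2
    nlinarith
  have hsqrtle : Real.sqrt (purity ρ - Mtr ρ ^ 2) ≤ F :=
    calc Real.sqrt (purity ρ - Mtr ρ ^ 2) ≤ Real.sqrt (F ^ 2) := Real.sqrt_le_sqrt hFbound
      _ = F := Real.sqrt_sq key1.1
  rw [MRe, ← hRσ, hFeq]
  linarith
end

section
/- Let ρ be a density matrix on ℂ^d and define U(ρ,σ) = Tr(ρσ) + √((1 − Tr(ρ²))(1 − Tr(σ²))). Then for every real density matrix σ on ℂ^d (σ positive semidefinite, Tr σ = 1, σ = σ*), one has U(ρ,σ) ≤ 1/d + (1/(2d))·√( 4(d−1)² − 2d(d−1)·(Tr(ρ²) − Tr(ρ·ρ*)) ). -/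
open Matrix Complex ComplexOrder Classical

/-- `U(ρ,σ) = Tr(ρσ) + √((1 - Tr(ρ²))(1 - Tr(σ²)))`. -/
noncomputable def Ufun {n : Type*} [Fintype n] [DecidableEq n] (ρ σ : Matrix n n ℂ) : ℝ :=
  ((ρ * σ).trace).re +
    Real.sqrt ((1 - ((ρ * ρ).trace).re) * (1 - ((σ * σ).trace).re))

/-! ### Auxiliary lemmas -/

/-- Purity bound: for a PSD matrix of trace one, `Tr(M²) ≤ 1`. -/
lemma aux_trace_sq_le {d : ℕ} (M : Matrix (Fin d) (Fin d) ℂ) (hM : M.PosSemidef)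
    (ht : M.trace = 1) : ((M * M).trace).re ≤ 1 := by
  have hH := hM.isHermitian
  have htr : M.trace = ∑ i, (hH.eigenvalues i : ℂ) := by
    conv_lhs => rw [hH.spectral_theorem, Unitary.conjStarAlgAut_apply]
    rw [Matrix.trace_mul_cycle, (Matrix.mem_unitaryGroup_iff').mp (hH.eigenvectorUnitary).2]
    simp [Matrix.trace_diagonal]
  have htr2 : (M * M).trace = ∑ i, ((hH.eigenvalues i : ℂ))^2 := by
    set U : Matrix (Fin d) (Fin d) ℂ := (hH.eigenvectorUnitary : Matrix (Fin d) (Fin d) ℂ) with hU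
    set D : Matrix (Fin d) (Fin d) ℂ := diagonal (RCLike.ofReal ∘ hH.eigenvalues) with hD
    have h1 : star U * U = 1 := (Matrix.mem_unitaryGroup_iff').mp (hH.eigenvectorUnitary).2
    have h2 : M * M = U * (D * D) * star U := by
      conv_lhs => rw [hH.spectral_theorem, Unitary.conjStarAlgAut_apply]
      simp only [mul_assoc]
      rw [← mul_assoc (star U) U, h1, one_mul]
    rw [h2, Matrix.trace_mul_cycle, ← mul_assoc, h1, one_mul, Matrix.diagonal_mul_diagonal,
      Matrix.trace_diagonal]
    simp [sq]
  have hsum : ∑ i, hH.eigenvalues i = 1 := by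
    have h := htr.symm.trans ht
    have h2 : ((∑ i, hH.eigenvalues i : ℝ) : ℂ) = 1 := by push_cast; exact h
    exact_mod_cast h2
  have hnn : ∀ i, 0 ≤ hH.eigenvalues i := hM.eigenvalues_nonneg
  have hre : ((M*M).trace).re = ∑ i, (hH.eigenvalues i)^2 := by
    rw [htr2, Complex.re_sum]; norm_cast
  rw [hre]
  calc ∑ i, (hH.eigenvalues i)^2 ≤ ∑ i, hH.eigenvalues i * 1 := by
        apply Finset.sum_le_sum
        intro i _
        rw [sq]
        apply mul_le_mul_of_nonneg_left _ (hnn i)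
        rw [← hsum]
        exact Finset.single_le_sum (fun j _ => hnn j) (Finset.mem_univ i)
    _ = 1 := by simp [hsum]

/-- A matrix viewed as a Euclidean vector. -/
noncomputable def auxVec {d : ℕ} (A : Matrix (Fin d) (Fin d) ℂ) :
    EuclideanSpace ℂ (Fin d × Fin d) := WithLp.toLp 2 (fun p : Fin d × Fin d => A p.1 p.2)

lemma aux_inner_vec {d : ℕ} (A B : Matrix (Fin d) (Fin d) ℂ) :
    (inner ℂ (auxVec A) (auxVec B) : ℂ) = (Aᴴ * B).trace := by
  rw [Matrix.trace]
  simp only [PiLp.inner_apply, RCLike.inner_apply, auxVec, PiLp.toLp_apply, Matrix.diag_apply, Matrix.mul_apply,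
    Matrix.conjTranspose_apply, Fintype.sum_prod_type]
  rw [Finset.sum_comm]
  exact Finset.sum_congr rfl fun _ _ => Finset.sum_congr rfl fun _ _ => mul_comm _ _

/-- Cauchy–Schwarz for the trace inner product of Hermitian matrices. -/
lemma aux_cs_trace {d : ℕ} (X Y : Matrix (Fin d) (Fin d) ℂ) (hX : X.IsHermitian)
    (hY : Y.IsHermitian) :
    ((X * Y).trace).re ≤
      Real.sqrt (((X * X).trace).re) * Real.sqrt (((Y * Y).trace).re) := by
  have h1 : ((X * Y).trace).re = RCLike.re (inner ℂ (auxVec X) (auxVec Y) : ℂ) := by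
    rw [aux_inner_vec, hX.eq]; rfl
  have h2 : Real.sqrt (((X * X).trace).re) = ‖auxVec X‖ := by
    rw [@norm_eq_sqrt_re_inner ℂ, aux_inner_vec, hX.eq]; rfl
  have h3 : Real.sqrt (((Y * Y).trace).re) = ‖auxVec Y‖ := by
    rw [@norm_eq_sqrt_re_inner ℂ, aux_inner_vec, hY.eq]; rfl
  rw [h1, h2, h3]
  calc RCLike.re (inner ℂ (auxVec X) (auxVec Y) : ℂ) ≤ ‖(inner ℂ (auxVec X) (auxVec Y) : ℂ)‖ :=
        RCLike.re_le_norm _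
    _ ≤ ‖auxVec X‖ * ‖auxVec Y‖ := norm_inner_le_norm _ _

lemma aux_trace_sq_nonneg {d : ℕ} (X : Matrix (Fin d) (Fin d) ℂ) (hX : X.IsHermitian) :
    0 ≤ ((X * X).trace).re := by
  have h : (X * X).trace = inner ℂ (auxVec X) (auxVec X) := by rw [aux_inner_vec, hX.eq]
  rw [h]
  exact (inner_self_nonneg : (0:ℝ) ≤ RCLike.re (inner ℂ (auxVec X) (auxVec X) : ℂ))

/-- 2-dimensional Cauchy–Schwarz. -/
lemma aux_two_cs (a b c e : ℝ) (ha : 0 ≤ a) (hb : 0 ≤ b) (hc : 0 ≤ c) (he : 0 ≤ e) :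
    a * b + c * e ≤ Real.sqrt ((a^2 + c^2) * (b^2 + e^2)) := by
  have h : (a*b + c*e)^2 ≤ (a^2 + c^2) * (b^2 + e^2) := by nlinarith [sq_nonneg (a*e - c*b)]
  calc a*b + c*e = Real.sqrt ((a*b + c*e)^2) := (Real.sqrt_sq (by positivity)).symm
    _ ≤ Real.sqrt ((a^2 + c^2) * (b^2 + e^2)) := Real.sqrt_le_sqrt h

lemma aux_trace_shift {d : ℕ} (hd : (d:ℂ) ≠ 0) (M N : Matrix (Fin d) (Fin d) ℂ)
    (hM : M.trace = 1) (hN : N.trace = 1) :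
    ((M - ((d:ℂ))⁻¹ • 1) * (N - ((d:ℂ))⁻¹ • 1)).trace = (M * N).trace - (d:ℂ)⁻¹ := by
  simp only [Matrix.sub_mul, Matrix.mul_sub, Matrix.smul_mul, Matrix.mul_smul,
    Matrix.trace_sub, Matrix.trace_smul, hM, hN, Matrix.trace_one, smul_smul,
    Matrix.one_mul, Matrix.mul_one, smul_eq_mul, mul_one, Fintype.card_fin]
  field_simp
  ring

lemma aux_trace_mconj {d : ℕ} (M : Matrix (Fin d) (Fin d) ℂ) :
    (mconj M).trace = starRingEnd ℂ M.trace := by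
  simp [mconj, Matrix.trace, Matrix.diag, map_sum]

lemma aux_mconj_mul {d : ℕ} (M N : Matrix (Fin d) (Fin d) ℂ) :
    mconj (M * N) = mconj M * mconj N := by
  ext i j
  simp [mconj, Matrix.mul_apply, map_sum]

theorem stmt16 (d : ℕ) (ρ σ : Matrix (Fin d) (Fin d) ℂ) (hρ : IsDensityMatrix ρ)
    (hσ : IsDensityMatrix σ) (hσreal : σ = mconj σ) :
    Ufun ρ σ ≤ 1 / (d : ℝ) + (1 / (2 * (d : ℝ))) *
      Real.sqrt (4 * ((d : ℝ) - 1) ^ 2 -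
        2 * (d : ℝ) * ((d : ℝ) - 1) * (((ρ * ρ).trace).re - ((ρ * mconj ρ).trace).re)) := by
  obtain ⟨hρP, hρT⟩ := hρ
  obtain ⟨hσP, hσT⟩ := hσ
  -- d ≠ 0
  rcases Nat.eq_zero_or_pos d with hd0 | hdpos
  · exfalso
    subst hd0
    have : ρ.trace = 0 := by simp [Matrix.trace]
    rw [hρT] at this
    exact one_ne_zero this
  have hd1 : (1:ℝ) ≤ (d:ℝ) := by exact_mod_cast hdpos
  have hdR : (d:ℝ) ≠ 0 := by positivity
  have hdC : (d:ℂ) ≠ 0 := by exact_mod_cast Nat.cast_ne_zero.mpr hdpos.ne'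
  have hHρ := hρP.isHermitian
  have hHσ := hσP.isHermitian
  set T : ℝ := ((ρ * ρ).trace).re with hT
  set S : ℝ := ((ρ * mconj ρ).trace).re with hS
  set Q : ℝ := ((σ * σ).trace).re with hQ
  set P : ℝ := ((ρ * σ).trace).re with hP
  set A : Matrix (Fin d) (Fin d) ℂ := reState ρ with hA
  -- A is Hermitian with trace 1
  have hmρσ : mconj ρ * σ = mconj (ρ * σ) := by
    rw [aux_mconj_mul]; rw [← hσreal]
  have hTA : A.trace = 1 := by
    rw [hA, reState, Matrix.trace_smul, Matrix.trace_add, aux_trace_mconj, hρT]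
    simp
    norm_num
  have hAH : A.IsHermitian := by
    apply Matrix.IsHermitian.ext
    intro i j
    have h1 : ρ j i = star (ρ i j) := by
      conv_lhs => rw [← hHρ.eq]
      simp [Matrix.conjTranspose_apply]
    simp only [hA, reState, Matrix.smul_apply, Matrix.add_apply, mconj, Matrix.map_apply,
      star_mul', smul_eq_mul, star_add]
    rw [h1]
    simp
    try ring
  set X : Matrix (Fin d) (Fin d) ℂ := A - ((d:ℂ))⁻¹ • 1 with hX
  set Y : Matrix (Fin d) (Fin d) ℂ := σ - ((d:ℂ))⁻¹ • 1 with hY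
  have hXH : X.IsHermitian := by
    rw [hX, Matrix.IsHermitian, Matrix.conjTranspose_sub, Matrix.conjTranspose_smul, hAH.eq,
      Matrix.conjTranspose_one]
    simp
  have hYH : Y.IsHermitian := by
    rw [hY, Matrix.IsHermitian, Matrix.conjTranspose_sub, Matrix.conjTranspose_smul, hHσ.eq,
      Matrix.conjTranspose_one]
    simp
  -- trace computations
  have hAσ : ((A * σ).trace).re = P := by
    rw [hA, reState, Matrix.smul_mul, Matrix.trace_smul, Matrix.add_mul, Matrix.trace_add,
      hmρσ, aux_trace_mconj]
    simp [Complex.add_re, Complex.div_re]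
    rw [hP]
    ring
  have hAA : ((A * A).trace).re = (T + S)/2 := by
    have expand : A * A = ((1:ℂ)/4) • (ρ * ρ + ρ * mconj ρ + mconj ρ * ρ + mconj ρ * mconj ρ) := by
      rw [hA, reState, Matrix.smul_mul, Matrix.mul_smul, smul_smul, Matrix.add_mul,
        Matrix.mul_add, Matrix.mul_add]
      norm_num
      abel_nf
    rw [expand, Matrix.trace_smul]
    have h1 : (mconj ρ * ρ).trace = (ρ * mconj ρ).trace := Matrix.trace_mul_comm _ _
    have h2 : (mconj ρ * mconj ρ).trace = starRingEnd ℂ ((ρ * ρ).trace) := by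
      rw [← aux_mconj_mul, aux_trace_mconj]
    rw [Matrix.trace_add, Matrix.trace_add, Matrix.trace_add, h1, h2]
    simp [Complex.add_re, Complex.div_re, hT, hS]
    ring
  have hXY : ((X * Y).trace).re = P - 1/(d:ℝ) := by
    rw [hX, hY, aux_trace_shift hdC A σ hTA hσT]
    simp [Complex.sub_re, hAσ]
  have hXX : ((X * X).trace).re = (T + S)/2 - 1/(d:ℝ) := by
    rw [hX, aux_trace_shift hdC A A hTA hTA]
    simp [Complex.sub_re, hAA]
  have hYY : ((Y * Y).trace).re = Q - 1/(d:ℝ) := by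
    rw [hY, aux_trace_shift hdC σ σ hσT hσT]
    simp [Complex.sub_re, hQ]
  -- nonnegativity facts
  have ht1 : 0 ≤ (T + S)/2 - 1/(d:ℝ) := hXX ▸ aux_trace_sq_nonneg X hXH
  have ht2 : 0 ≤ Q - 1/(d:ℝ) := hYY ▸ aux_trace_sq_nonneg Y hYH
  have hTle : T ≤ 1 := aux_trace_sq_le ρ hρP hρT
  have hQle : Q ≤ 1 := aux_trace_sq_le σ hσP hσT
  -- Cauchy–Schwarz step
  have hcs : P - 1/(d:ℝ) ≤
      Real.sqrt ((T + S)/2 - 1/(d:ℝ)) * Real.sqrt (Q - 1/(d:ℝ)) := by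
    have := aux_cs_trace X Y hXH hYH
    rwa [hXY, hXX, hYY] at this
  -- 2D Cauchy–Schwarz step
  have h2cs : Real.sqrt ((T + S)/2 - 1/(d:ℝ)) * Real.sqrt (Q - 1/(d:ℝ)) +
      Real.sqrt (1 - T) * Real.sqrt (1 - Q) ≤
      Real.sqrt ((((T + S)/2 - 1/(d:ℝ)) + (1 - T)) * ((Q - 1/(d:ℝ)) + (1 - Q))) := by
    have h := aux_two_cs (Real.sqrt ((T + S)/2 - 1/(d:ℝ))) (Real.sqrt (Q - 1/(d:ℝ)))
      (Real.sqrt (1 - T)) (Real.sqrt (1 - Q))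
      (Real.sqrt_nonneg _) (Real.sqrt_nonneg _) (Real.sqrt_nonneg _) (Real.sqrt_nonneg _)
    rwa [Real.sq_sqrt ht1, Real.sq_sqrt ht2, Real.sq_sqrt (by linarith), Real.sq_sqrt (by linarith)]
      at h
  -- final algebra
  have hfinal : Real.sqrt ((((T + S)/2 - 1/(d:ℝ)) + (1 - T)) * ((Q - 1/(d:ℝ)) + (1 - Q))) =
      (1 / (2 * (d:ℝ))) * Real.sqrt (4 * ((d:ℝ) - 1)^2 - 2*(d:ℝ)*((d:ℝ) - 1)*(T - S)) := by
    rw [show (1 / (2 * (d:ℝ))) = Real.sqrt ((1 / (2 * (d:ℝ)))^2) from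
      (Real.sqrt_sq (by positivity)).symm,
      ← Real.sqrt_mul (sq_nonneg _)]
    congr 1
    field_simp
    ring
  have hUval : Ufun ρ σ = P + Real.sqrt (1 - T) * Real.sqrt (1 - Q) := by
    rw [Ufun, Real.sqrt_mul (by linarith)]
  rw [hUval, ← hfinal]
  have : P = 1/(d:ℝ) + (P - 1/(d:ℝ)) := by ring
  rw [this]
  have step : (P - 1/(d:ℝ)) + Real.sqrt (1 - T) * Real.sqrt (1 - Q) ≤
      Real.sqrt ((((T + S)/2 - 1/(d:ℝ)) + (1 - T)) * ((Q - 1/(d:ℝ)) + (1 - Q))) := by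
    calc (P - 1/(d:ℝ)) + Real.sqrt (1 - T) * Real.sqrt (1 - Q)
        ≤ Real.sqrt ((T + S)/2 - 1/(d:ℝ)) * Real.sqrt (Q - 1/(d:ℝ)) +
          Real.sqrt (1 - T) * Real.sqrt (1 - Q) := by linarith
      _ ≤ _ := h2cs
  linarith
end
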